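/- Let σ > 0, γ ∈ [0,1], 0 < Δ_∞ ≤ Δ_2, ξ > 0, and let α ≥ 2 be an integer. Let m ∈ ℝ^T with ‖m‖_2 ≤ ξ and let g ∈ ℝ^d satisfy ‖g‖_2 ≤ Δ_2 and ‖g‖_∞ ≤ Δ_∞. Then the Rényi divergence of order α between the product measure ⊗_{j=1}^d ( γ·N(g_j·m, σ²·I_T) + (1−γ)·N(0, σ²·I_T) ) and ⊗_{j=1}^d N(0, σ²·I_T) is at most ( (Δ_2²/Δ_∞²) / (α−1) ) · log( Σ_{ℓ=0}^{α} C(α,ℓ) · (1−γ)^{α−ℓ} · γ^ℓ · exp( ℓ(ℓ−1)·ξ²·Δ_∞² / (2σ²) ) ). -/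

import Mathlib

open MeasureTheory ProbabilityTheory Real
open scoped ENNReal NNReal Classical

/-- Rényi divergence of order `a` between measures `μ` and `ν`:
`(a-1)⁻¹ * log ∫ (dμ/dν)^a dν`, set to `⊤` when `μ` is not absolutely
continuous with respect to `ν`. -/
noncomputable def renyiDiv {E : Type*} [MeasurableSpace E] (a : ℝ) (μ ν : Measure E) : EReal :=
  if μ ≪ ν then (((a - 1)⁻¹ : ℝ) : EReal) * ENNReal.log (∫⁻ x, (μ.rnDeriv ν x) ^ a ∂ν)
  else ⊤

/-- Bernoulli(γ) distribution on ℝ, supported on {0, 1}. -/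
noncomputable def bern (γ : ℝ) : Measure ℝ :=
  ENNReal.ofReal γ • Measure.dirac 1 + ENNReal.ofReal (1 - γ) • Measure.dirac 0

/- ### Auxiliary lemmas -/

lemma lintegral_pi_prod {n : ℕ} {E : Type*} [MeasurableSpace E]
    (μ : Fin n → Measure E) [∀ i, SigmaFinite (μ i)]
    (f : Fin n → E → ℝ≥0∞) (hf : ∀ i, Measurable (f i)) :
    ∫⁻ x, ∏ i, f i (x i) ∂Measure.pi μ = ∏ i, ∫⁻ y, f i y ∂μ i := by
  induction n with
  | zero => simp [Measure.pi_of_empty]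
  | succ n ih =>
    have hmp := MeasureTheory.measurePreserving_piFinSuccAbove μ 0
    have hmeas : Measurable (fun p : E × (Fin n → E) =>
        f 0 p.1 * ∏ j, f j.succ (p.2 j)) := by
      apply Measurable.mul
      · exact (hf 0).comp measurable_fst
      · exact Finset.measurable_prod _ fun j _ =>
          (hf j.succ).comp ((measurable_pi_apply j).comp measurable_snd)
    have key := hmp.lintegral_comp hmeas
    have heq : ∀ x : Fin (n+1) → E,
        (fun p : E × (Fin n → E) => f 0 p.1 * ∏ j, f j.succ (p.2 j))
          (MeasurableEquiv.piFinSuccAbove (fun _ => E) 0 x) = ∏ i, f i (x i) := by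
      intro x
      simp [MeasurableEquiv.piFinSuccAbove, Fin.prod_univ_succ, Fin.zero_succAbove, Fin.tail]
    calc ∫⁻ x, ∏ i, f i (x i) ∂Measure.pi μ
        = ∫⁻ b : E × (Fin n → E), f 0 b.1 * ∏ j, f j.succ (b.2 j)
            ∂(μ 0).prod (Measure.pi fun j => μ (Fin.succAbove 0 j)) := by
          rw [← key]; exact lintegral_congr fun x => (heq x).symm
      _ = (∫⁻ y, f 0 y ∂μ 0) * ∫⁻ z, ∏ j, f j.succ (z j)
            ∂(Measure.pi fun j => μ (Fin.succAbove 0 j)) := by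
          refine lintegral_prod_mul (μ := μ 0)
            (ν := Measure.pi fun j => μ (Fin.succAbove 0 j))
            (g := fun z => ∏ j, f j.succ (z j)) (hf 0).aemeasurable ?_
          exact (Finset.measurable_prod _ fun j _ =>
            (hf j.succ).comp (measurable_pi_apply j)).aemeasurable
      _ = ∏ i, ∫⁻ y, f i y ∂μ i := by
          simp_rw [Fin.zero_succAbove]
          rw [ih (fun j => μ j.succ) (fun j => f j.succ) (fun j => hf j.succ),
            Fin.prod_univ_succ]

lemma pi_withDensity {n : ℕ} {E : Type*} [MeasurableSpace E]
    (μ : Fin n → Measure E) [∀ i, SigmaFinite (μ i)]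
    (f : Fin n → E → ℝ≥0∞) (hf : ∀ i, Measurable (f i))
    (hs : ∀ i, SigmaFinite ((μ i).withDensity (f i))) :
    Measure.pi (fun i => (μ i).withDensity (f i))
      = (Measure.pi μ).withDensity (fun x => ∏ i, f i (x i)) := by
  haveI : ∀ i, SigmaFinite ((μ i).withDensity (f i)) := hs
  refine (Measure.pi_eq (μ := fun i => (μ i).withDensity (f i))
    (μ' := (Measure.pi μ).withDensity fun x => ∏ i, f i (x i)) fun s hsm => ?_)
  rw [withDensity_apply _ (MeasurableSet.univ_pi hsm),
    ← lintegral_indicator (MeasurableSet.univ_pi hsm)]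
  have hind : ∀ x : Fin n → E, (Set.pi Set.univ s).indicator (fun x => ∏ i, f i (x i)) x
      = ∏ i, (s i).indicator (f i) (x i) := by
    intro x
    by_cases hx : x ∈ Set.pi Set.univ s
    · rw [Set.indicator_of_mem hx]
      exact Finset.prod_congr rfl fun i _ =>
        (Set.indicator_of_mem (hx i (Set.mem_univ i)) _).symm
    · rw [Set.indicator_of_notMem hx]
      rw [Set.mem_pi] at hx
      push_neg at hx
      obtain ⟨i, _, hi⟩ := hx
      exact (Finset.prod_eq_zero (Finset.mem_univ i)
        (Set.indicator_of_notMem hi _)).symm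
  simp_rw [hind]
  rw [lintegral_pi_prod μ _ (fun i => (hf i).indicator (hsm i))]
  exact Finset.prod_congr rfl fun i _ => by
    rw [lintegral_indicator (hsm i), withDensity_apply _ (hsm i)]

lemma gaussian_ratio (c : ℝ) {v : ℝ≥0} (hv : v ≠ 0) :
    gaussianReal c v = (gaussianReal 0 v).withDensity
      (fun x => ENNReal.ofReal (Real.exp (c * x / v - c ^ 2 / (2 * v)))) := by
  have hvpos : (0:ℝ) < v := lt_of_le_of_ne v.coe_nonneg (by exact_mod_cast hv.symm)
  rw [gaussianReal_of_var_ne_zero _ hv, gaussianReal_of_var_ne_zero _ hv,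
    ← withDensity_mul _ (measurable_gaussianPDF 0 v)
      (by fun_prop : Measurable fun x => ENNReal.ofReal (Real.exp (c * x / v - c ^ 2 / (2 * v))))]
  congr 1
  ext x
  simp only [Pi.mul_apply, gaussianPDF, gaussianPDFReal]
  rw [← ENNReal.ofReal_mul (by positivity)]
  congr 1
  have h2 : rexp (-(x - 0)^2/(2*(v:ℝ))) * rexp (c*x/(v:ℝ) - c^2/(2*(v:ℝ)))
      = rexp (-(x-c)^2/(2*(v:ℝ))) := by
    rw [← Real.exp_add]; congr 1; field_simp; ring
  conv_rhs => rw [mul_assoc, ← Real.exp_add]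
  congr 1
  field_simp
  ring

lemma lintegral_exp_gaussian (a b : ℝ) {v : ℝ≥0} (hv : v ≠ 0) :
    ∫⁻ x, ENNReal.ofReal (Real.exp (a * x + b)) ∂gaussianReal 0 v
      = ENNReal.ofReal (Real.exp (a ^ 2 * v / 2 + b)) := by
  have hvpos : (0:ℝ) < v := lt_of_le_of_ne v.coe_nonneg (by exact_mod_cast hv.symm)
  rw [gaussianReal_of_var_ne_zero _ hv,
    lintegral_withDensity_eq_lintegral_mul _ (measurable_gaussianPDF 0 v) (by fun_prop)]
  have hpt : ∀ x : ℝ, (gaussianPDF 0 v * fun x => ENNReal.ofReal (Real.exp (a * x + b))) x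
      = ENNReal.ofReal (Real.exp (a ^ 2 * v / 2 + b)) * gaussianPDF (a * v) v x := by
    intro x
    simp only [Pi.mul_apply, gaussianPDF, gaussianPDFReal]
    rw [← ENNReal.ofReal_mul (by positivity), ← ENNReal.ofReal_mul (by positivity)]
    congr 1
    rw [mul_assoc, ← Real.exp_add]
    have hexp : rexp (-(x - 0) ^ 2 / (2 * (v:ℝ)) + (a * x + b))
        = rexp (a ^ 2 * (v:ℝ) / 2 + b) * rexp (-(x - a * (v:ℝ)) ^ 2 / (2 * (v:ℝ))) := by
      rw [← Real.exp_add]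
      congr 1
      field_simp
      ring
    rw [hexp]
    ring
  simp_rw [hpt]
  rw [lintegral_const_mul _ (measurable_gaussianPDF _ _), lintegral_gaussianPDF_eq_one _ hv,
    mul_one]

lemma lintegral_exp_lin_pi {T : ℕ} (a b : Fin T → ℝ) {v : ℝ≥0} (hv : v ≠ 0) :
    ∫⁻ x : Fin T → ℝ, ENNReal.ofReal (Real.exp (∑ t, (a t * x t + b t)))
        ∂(Measure.pi fun _ : Fin T => gaussianReal 0 v)
      = ENNReal.ofReal (Real.exp (∑ t, (a t ^ 2 * v / 2 + b t))) := by
  have h1 : ∀ x : Fin T → ℝ, ENNReal.ofReal (Real.exp (∑ t, (a t * x t + b t)))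
      = ∏ t, ENNReal.ofReal (Real.exp (a t * x t + b t)) := by
    intro x
    rw [Real.exp_sum, ENNReal.ofReal_prod_of_nonneg (fun t _ => (Real.exp_pos _).le)]
  simp_rw [h1]
  rw [lintegral_pi_prod (fun _ => gaussianReal 0 v)
    (fun t => fun y => ENNReal.ofReal (Real.exp (a t * y + b t))) (fun t => by fun_prop)]
  simp_rw [lintegral_exp_gaussian _ _ hv]
  rw [← ENNReal.ofReal_prod_of_nonneg (fun t _ => (Real.exp_pos _).le), ← Real.exp_sum]

lemma col_lintegral (γ : ℝ) (hγ0 : 0 ≤ γ) (hγ1 : γ ≤ 1) (α : ℕ) (c : ℝ) {v : ℝ≥0} (hv : v ≠ 0)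
    (T : ℕ) (m : Fin T → ℝ) :
    ∫⁻ x : Fin T → ℝ, (ENNReal.ofReal γ *
        ENNReal.ofReal (Real.exp (∑ t, (c * m t * x t / v - (c * m t) ^ 2 / (2 * v))))
        + ENNReal.ofReal (1 - γ)) ^ α ∂(Measure.pi fun _ : Fin T => gaussianReal 0 v)
    = ENNReal.ofReal (∑ ℓ ∈ Finset.range (α + 1),
        (α.choose ℓ : ℝ) * (1 - γ) ^ (α - ℓ) * γ ^ ℓ *
          Real.exp ((ℓ:ℝ) * ((ℓ:ℝ) - 1) * (∑ t, m t ^ 2) * c ^ 2 / (2 * v))) := by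
  set L : (Fin T → ℝ) → ℝ := fun x => ∑ t, (c * m t * x t / v - (c * m t) ^ 2 / (2 * v)) with hL
  have hint : ∀ x : Fin T → ℝ,
      (ENNReal.ofReal γ * ENNReal.ofReal (Real.exp (L x)) + ENNReal.ofReal (1 - γ)) ^ α
      = ∑ ℓ ∈ Finset.range (α + 1), ENNReal.ofReal
          ((α.choose ℓ : ℝ) * (1 - γ) ^ (α - ℓ) * γ ^ ℓ * Real.exp ((ℓ:ℝ) * L x)) := by
    intro x
    have h1γ : (0:ℝ) ≤ 1 - γ := by linarith
    rw [← ENNReal.ofReal_mul hγ0,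
      ← ENNReal.ofReal_add (mul_nonneg hγ0 (Real.exp_pos _).le) h1γ,
      ← ENNReal.ofReal_pow (by positivity), add_pow]
    rw [ENNReal.ofReal_sum_of_nonneg]
    · congr 1
      ext ℓ
      congr 1
      rw [mul_pow, ← Real.exp_nat_mul]
      ring
    · intro ℓ _
      exact mul_nonneg (mul_nonneg (pow_nonneg (mul_nonneg hγ0 (Real.exp_pos _).le) _)
        (pow_nonneg h1γ _)) (Nat.cast_nonneg _)
  rw [lintegral_congr fun x => hint x]
  rw [lintegral_finset_sum _ (fun ℓ _ => by fun_prop)]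
  have hterm : ∀ ℓ ∈ Finset.range (α + 1),
      ∫⁻ x : Fin T → ℝ, ENNReal.ofReal
          ((α.choose ℓ : ℝ) * (1 - γ) ^ (α - ℓ) * γ ^ ℓ * Real.exp ((ℓ:ℝ) * L x))
        ∂(Measure.pi fun _ : Fin T => gaussianReal 0 v)
      = ENNReal.ofReal ((α.choose ℓ : ℝ) * (1 - γ) ^ (α - ℓ) * γ ^ ℓ *
          Real.exp ((ℓ:ℝ) * ((ℓ:ℝ) - 1) * (∑ t, m t ^ 2) * c ^ 2 / (2 * v))) := by
    intro ℓ _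
    have hmul : ∀ x : Fin T → ℝ, ENNReal.ofReal
        ((α.choose ℓ : ℝ) * (1 - γ) ^ (α - ℓ) * γ ^ ℓ * Real.exp ((ℓ:ℝ) * L x))
        = ENNReal.ofReal ((α.choose ℓ : ℝ) * (1 - γ) ^ (α - ℓ) * γ ^ ℓ) *
          ENNReal.ofReal (Real.exp ((ℓ:ℝ) * L x)) := fun x =>
      ENNReal.ofReal_mul (mul_nonneg (mul_nonneg (Nat.cast_nonneg _)
        (pow_nonneg (by linarith) _)) (pow_nonneg hγ0 _))
    simp_rw [hmul]
    rw [lintegral_const_mul _ (by fun_prop)]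
    have hLsum : ∀ x : Fin T → ℝ, (ℓ:ℝ) * L x
        = ∑ t, (((ℓ:ℝ) * c * m t / v) * x t + (-((ℓ:ℝ) * (c * m t) ^ 2 / (2 * v)))) := by
      intro x
      rw [hL, Finset.mul_sum]
      congr 1; ext t; field_simp; ring
    simp_rw [hLsum]
    rw [lintegral_exp_lin_pi _ _ hv]
    rw [← ENNReal.ofReal_mul (mul_nonneg (mul_nonneg (Nat.cast_nonneg _)
      (pow_nonneg (by linarith) _)) (pow_nonneg hγ0 _))]
    congr 2
    have hvne : ((v:ℝ)) ≠ 0 := by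
      exact_mod_cast hv
    have hper : ∀ t : Fin T, ((ℓ:ℝ) * c * m t / v) ^ 2 * v / 2
        + -((ℓ:ℝ) * (c * m t) ^ 2 / (2 * v))
        = (ℓ:ℝ) * ((ℓ:ℝ) - 1) * m t ^ 2 * c ^ 2 / (2 * v) := by
      intro t; field_simp; ring
    rw [Finset.sum_congr rfl fun t _ => hper t, Finset.mul_sum, Finset.sum_mul,
      Finset.sum_div]
  rw [Finset.sum_congr rfl hterm, ← ENNReal.ofReal_sum_of_nonneg]
  intro ℓ _
  exact mul_nonneg (mul_nonneg (mul_nonneg (Nat.cast_nonneg _)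
    (pow_nonneg (by linarith) _)) (pow_nonneg hγ0 _)) (Real.exp_pos _).le

noncomputable def Bfun (γ σ : ℝ) (α : ℕ) (s : ℝ) : ℝ :=
  ∑ ℓ ∈ Finset.range (α + 1), (α.choose ℓ : ℝ) * (1 - γ) ^ (α - ℓ) * γ ^ ℓ *
    Real.exp ((ℓ : ℝ) * ((ℓ : ℝ) - 1) * s / (2 * σ ^ 2))

lemma weights_sum (γ : ℝ) (α : ℕ) :
    ∑ ℓ ∈ Finset.range (α + 1), (α.choose ℓ : ℝ) * (1 - γ) ^ (α - ℓ) * γ ^ ℓ = 1 := by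
  have h := add_pow γ (1 - γ) α
  simp only [add_sub_cancel, one_pow] at h
  calc ∑ ℓ ∈ Finset.range (α + 1), (α.choose ℓ : ℝ) * (1 - γ) ^ (α - ℓ) * γ ^ ℓ
      = ∑ ℓ ∈ Finset.range (α + 1), γ ^ ℓ * (1 - γ) ^ (α - ℓ) * (α.choose ℓ : ℝ) :=
        Finset.sum_congr rfl fun ℓ _ => by ring
    _ = 1 := h.symm

lemma weight_nonneg (γ : ℝ) (α : ℕ) (hγ0 : 0 ≤ γ) (hγ1 : γ ≤ 1) (ℓ : ℕ) :
    0 ≤ (α.choose ℓ : ℝ) * (1 - γ) ^ (α - ℓ) * γ ^ ℓ :=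
  mul_nonneg (mul_nonneg (Nat.cast_nonneg _) (pow_nonneg (by linarith) _)) (pow_nonneg hγ0 _)

lemma exparg_nonneg (σ : ℝ) (hσ : 0 < σ) {s : ℝ} (hs : 0 ≤ s) (ℓ : ℕ) :
    0 ≤ (ℓ : ℝ) * ((ℓ : ℝ) - 1) * s / (2 * σ ^ 2) := by
  apply div_nonneg _ (by positivity)
  apply mul_nonneg _ hs
  rcases Nat.eq_zero_or_pos ℓ with h | h
  · simp [h]
  · have : (1:ℝ) ≤ (ℓ:ℝ) := by exact_mod_cast h
    nlinarith

lemma Bfun_ge_one (γ σ : ℝ) (α : ℕ) (hγ0 : 0 ≤ γ) (hγ1 : γ ≤ 1) (hσ : 0 < σ) {s : ℝ}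
    (hs : 0 ≤ s) : 1 ≤ Bfun γ σ α s := by
  rw [Bfun]
  conv_lhs => rw [← weights_sum γ α]
  apply Finset.sum_le_sum
  intro ℓ _
  nth_rewrite 1 [← mul_one ((α.choose ℓ : ℝ) * (1 - γ) ^ (α - ℓ) * γ ^ ℓ)]
  exact mul_le_mul_of_nonneg_left
    (Real.one_le_exp (exparg_nonneg σ hσ hs ℓ)) (weight_nonneg γ α hγ0 hγ1 ℓ)

lemma Bfun_pos (γ σ : ℝ) (α : ℕ) (hγ0 : 0 ≤ γ) (hγ1 : γ ≤ 1) (hσ : 0 < σ) {s : ℝ}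
    (hs : 0 ≤ s) : 0 < Bfun γ σ α s :=
  lt_of_lt_of_le one_pos (Bfun_ge_one γ σ α hγ0 hγ1 hσ hs)

lemma log_Bfun_le (γ σ : ℝ) (α : ℕ) (hγ0 : 0 ≤ γ) (hγ1 : γ ≤ 1) (hσ : 0 < σ) {s s₀ : ℝ}
    (hs : 0 ≤ s) (hss : s ≤ s₀) (hs₀ : 0 < s₀) :
    Real.log (Bfun γ σ α s) ≤ (s / s₀) * Real.log (Bfun γ σ α s₀) := by
  rcases eq_or_lt_of_le hs with h0 | hspos
  · have : Bfun γ σ α s = 1 := by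
      rw [← h0, Bfun]
      have : ∀ ℓ : ℕ, (ℓ:ℝ) * ((ℓ:ℝ) - 1) * 0 / (2 * σ ^ 2) = 0 := fun ℓ => by ring
      simp only [this, Real.exp_zero, mul_one]
      exact weights_sum γ α
    rw [this, Real.log_one, ← h0, zero_div, zero_mul]
  · set θ := s / s₀ with hθ
    have hθpos : 0 < θ := div_pos hspos hs₀
    have hθ1 : θ ≤ 1 := (div_le_one hs₀).mpr hss
    have hkey : Bfun γ σ α s ≤ (Bfun γ σ α s₀) ^ θ := by
      have hexp : ∀ ℓ : ℕ, Real.exp ((ℓ : ℝ) * ((ℓ : ℝ) - 1) * s / (2 * σ ^ 2))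
          = (Real.exp ((ℓ : ℝ) * ((ℓ : ℝ) - 1) * s₀ / (2 * σ ^ 2))) ^ θ := by
        intro ℓ
        rw [← Real.exp_mul]
        congr 1
        rw [hθ]
        field_simp
      rw [Bfun]
      simp_rw [hexp]
      have hjen := Real.arith_mean_le_rpow_mean (Finset.range (α+1))
        (fun ℓ => (α.choose ℓ : ℝ) * (1 - γ) ^ (α - ℓ) * γ ^ ℓ)
        (fun ℓ => (Real.exp ((ℓ : ℝ) * ((ℓ : ℝ) - 1) * s₀ / (2 * σ ^ 2))) ^ θ)
        (fun ℓ _ => weight_nonneg γ α hγ0 hγ1 ℓ) (weights_sum γ α)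
        (fun ℓ _ => Real.rpow_nonneg (Real.exp_pos _).le θ)
        (p := 1/θ) ((one_le_div hθpos).mpr hθ1)
      calc ∑ ℓ ∈ Finset.range (α+1), (α.choose ℓ : ℝ) * (1 - γ) ^ (α - ℓ) * γ ^ ℓ *
            (Real.exp ((ℓ : ℝ) * ((ℓ : ℝ) - 1) * s₀ / (2 * σ ^ 2))) ^ θ
          ≤ (∑ ℓ ∈ Finset.range (α+1), (α.choose ℓ : ℝ) * (1 - γ) ^ (α - ℓ) * γ ^ ℓ *
            ((Real.exp ((ℓ : ℝ) * ((ℓ : ℝ) - 1) * s₀ / (2 * σ ^ 2))) ^ θ) ^ (1/θ)) ^ (1/(1/θ)) :=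
            hjen
        _ = (Bfun γ σ α s₀) ^ θ := by
            rw [one_div_one_div]
            congr 1
            rw [Bfun]
            refine Finset.sum_congr rfl fun ℓ _ => ?_
            rw [← Real.rpow_mul (Real.exp_pos _).le, mul_one_div_cancel (ne_of_gt hθpos),
              Real.rpow_one]
    calc Real.log (Bfun γ σ α s)
        ≤ Real.log ((Bfun γ σ α s₀) ^ θ) :=
          Real.log_le_log (Bfun_pos γ σ α hγ0 hγ1 hσ hs) hkey
      _ = θ * Real.log (Bfun γ σ α s₀) :=
          Real.log_rpow (Bfun_pos γ σ α hγ0 hγ1 hσ (le_trans hs hss)) θ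

theorem renyi_div_sgmf_transcript_le
    (σ γ Δ₂ Δinf ξ : ℝ) (hσ : 0 < σ) (hγ0 : 0 ≤ γ) (hγ1 : γ ≤ 1)
    (hΔinf : 0 < Δinf) (hΔ : Δinf ≤ Δ₂) (hξ : 0 < ξ)
    (α : ℕ) (hα : 2 ≤ α)
    (T d : ℕ) (m : Fin T → ℝ) (hm : Real.sqrt (∑ t, m t ^ 2) ≤ ξ)
    (g : Fin d → ℝ)
    (hg2 : Real.sqrt (∑ j, g j ^ 2) ≤ Δ₂)
    (hginf : ∀ j, |g j| ≤ Δinf) :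
    renyiDiv (α : ℝ)
      (Measure.pi fun j =>
        ENNReal.ofReal γ • (Measure.pi fun t => gaussianReal (g j * m t) (Real.toNNReal (σ ^ 2))) +
          ENNReal.ofReal (1 - γ) •
            (Measure.pi fun _ : Fin T => gaussianReal 0 (Real.toNNReal (σ ^ 2))))
      (Measure.pi fun _ : Fin d =>
        Measure.pi fun _ : Fin T => gaussianReal 0 (Real.toNNReal (σ ^ 2))) ≤
    (((Δ₂ ^ 2 / Δinf ^ 2) / ((α : ℝ) - 1) * Real.log (∑ ℓ ∈ Finset.range (α + 1),
        (α.choose ℓ : ℝ) * (1 - γ) ^ (α - ℓ) * γ ^ ℓ *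
          Real.exp ((ℓ : ℝ) * ((ℓ : ℝ) - 1) * ξ ^ 2 * Δinf ^ 2 / (2 * σ ^ 2))) : ℝ) : EReal) := by
  classical
  set v : ℝ≥0 := Real.toNNReal (σ ^ 2) with hvdef
  have hv : v ≠ 0 := by
    rw [hvdef, Ne, Real.toNNReal_eq_zero, not_le]
    positivity
  have hvr : (v : ℝ) = σ ^ 2 := Real.coe_toNNReal _ (by positivity)
  set ν₀ : Measure ℝ := gaussianReal 0 v with hν₀
  set νT : Measure (Fin T → ℝ) := Measure.pi fun _ : Fin T => ν₀ with hνT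
  set M : ℝ := ∑ t, m t ^ 2 with hMdef
  have hM0 : 0 ≤ M := Finset.sum_nonneg fun t _ => sq_nonneg _
  have hMξ : M ≤ ξ ^ 2 := by
    nlinarith [Real.sq_sqrt hM0, Real.sqrt_nonneg M]
  have hsg0 : 0 ≤ ∑ j, g j ^ 2 := Finset.sum_nonneg fun j _ => sq_nonneg _
  have hG2 : ∑ j, g j ^ 2 ≤ Δ₂ ^ 2 := by
    nlinarith [Real.sq_sqrt hsg0, Real.sqrt_nonneg (∑ j, g j ^ 2)]
  have hgsq : ∀ j, g j ^ 2 ≤ Δinf ^ 2 := by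
    intro j
    have := hginf j
    nlinarith [abs_nonneg (g j), sq_abs (g j)]
  set G : ℝ → (Fin T → ℝ) → ℝ≥0∞ := fun c x =>
    ENNReal.ofReal (Real.exp (∑ t, (c * m t * x t / v - (c * m t) ^ 2 / (2 * v)))) with hGdef
  have hGmeas : ∀ c, Measurable (G c) := fun c => by
    rw [hGdef]; fun_prop
  set F : ℝ → (Fin T → ℝ) → ℝ≥0∞ := fun c x =>
    ENNReal.ofReal γ * G c x + ENNReal.ofReal (1 - γ) with hFdef
  have hFmeas : ∀ c, Measurable (F c) := fun c => by
    rw [hFdef]; exact (measurable_const.mul (hGmeas c)).add measurable_const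
  -- step 1 : product of shifted gaussians as density against νT
  have eq1 : ∀ c : ℝ, Measure.pi (fun t : Fin T => gaussianReal (c * m t) v)
      = νT.withDensity (G c) := by
    intro c
    have hfam : (fun t : Fin T => gaussianReal (c * m t) v)
        = fun t => ν₀.withDensity (fun y =>
            ENNReal.ofReal (Real.exp ((c * m t) * y / v - (c * m t) ^ 2 / (2 * v)))) := by
      funext t; rw [hν₀]; exact gaussian_ratio (c * m t) hv
    rw [hfam, pi_withDensity _ _ (fun t => by fun_prop)
      (fun t => by
        rw [show ν₀.withDensity (fun y =>
            ENNReal.ofReal (Real.exp ((c * m t) * y / v - (c * m t) ^ 2 / (2 * v))))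
          = gaussianReal (c * m t) v from by rw [hν₀, ← gaussian_ratio (c * m t) hv]]
        infer_instance)]
    congr 1
    funext x
    show _ = ENNReal.ofReal (Real.exp (∑ t, (c * m t * x t / v - (c * m t) ^ 2 / (2 * v))))
    rw [Real.exp_sum, ENNReal.ofReal_prod_of_nonneg (fun t _ => (Real.exp_pos _).le)]
  -- step 2 : mixture as density
  have eq2 : ∀ c : ℝ, ENNReal.ofReal γ • (νT.withDensity (G c)) + ENNReal.ofReal (1 - γ) • νT
      = νT.withDensity (F c) := by
    intro c
    rw [← withDensity_smul _ (hGmeas c), ← withDensity_const,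
      ← withDensity_add_right _ measurable_const]
    congr 1
  have eqj : ∀ j : Fin d,
      (ENNReal.ofReal γ • (Measure.pi fun t => gaussianReal (g j * m t) v)
        + ENNReal.ofReal (1 - γ) • νT) = νT.withDensity (F (g j)) := by
    intro j
    rw [eq1 (g j), eq2 (g j)]
  have hfinj : ∀ j : Fin d, SigmaFinite (νT.withDensity (F (g j))) := by
    intro j
    rw [← eqj j]
    have h1 : IsFiniteMeasure (ENNReal.ofReal γ •
        (Measure.pi fun t => gaussianReal (g j * m t) v)) := by
      refine ⟨?_⟩
      rw [Measure.smul_apply, smul_eq_mul, measure_univ, mul_one]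
      exact ENNReal.ofReal_lt_top
    have h2 : IsFiniteMeasure (ENNReal.ofReal (1 - γ) • νT) := by
      refine ⟨?_⟩
      rw [Measure.smul_apply, smul_eq_mul, measure_univ, mul_one]
      exact ENNReal.ofReal_lt_top
    infer_instance
  -- step 3 : whole mixture product as density
  set νd : Measure (Fin d → Fin T → ℝ) := Measure.pi fun _ : Fin d => νT with hνd
  set Fprod : (Fin d → Fin T → ℝ) → ℝ≥0∞ := fun x => ∏ j, F (g j) (x j) with hFprod
  have hFprodmeas : Measurable Fprod := by
    rw [hFprod]
    exact Finset.measurable_prod _ fun j _ => (hFmeas (g j)).comp (measurable_pi_apply j)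
  have eq3 : (Measure.pi fun j =>
      ENNReal.ofReal γ • (Measure.pi fun t => gaussianReal (g j * m t) v)
        + ENNReal.ofReal (1 - γ) • νT) = νd.withDensity Fprod := by
    rw [show (fun j => ENNReal.ofReal γ • (Measure.pi fun t => gaussianReal (g j * m t) v)
        + ENNReal.ofReal (1 - γ) • νT) = fun j => νT.withDensity (F (g j)) from funext eqj]
    exact pi_withDensity _ _ (fun j => hFmeas (g j)) hfinj
  have hac : (Measure.pi fun j =>
      ENNReal.ofReal γ • (Measure.pi fun t => gaussianReal (g j * m t) v)
        + ENNReal.ofReal (1 - γ) • νT) ≪ νd := by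
    rw [eq3]; exact withDensity_absolutelyContinuous _ _
  rw [renyiDiv, if_pos hac]
  -- compute the lintegral
  have hBpos : ∀ j : Fin d, 0 < Bfun γ σ α (M * g j ^ 2) := fun j =>
    Bfun_pos γ σ α hγ0 hγ1 hσ (mul_nonneg hM0 (sq_nonneg _))
  have hint : ∫⁻ x, ((Measure.pi fun j =>
      ENNReal.ofReal γ • (Measure.pi fun t => gaussianReal (g j * m t) v)
        + ENNReal.ofReal (1 - γ) • νT).rnDeriv νd x) ^ (α:ℝ) ∂νd
      = ENNReal.ofReal (∏ j, Bfun γ σ α (M * g j ^ 2)) := by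
    have h1 : (Measure.pi fun j =>
        ENNReal.ofReal γ • (Measure.pi fun t => gaussianReal (g j * m t) v)
          + ENNReal.ofReal (1 - γ) • νT).rnDeriv νd =ᵐ[νd] Fprod := by
      rw [eq3]; exact Measure.rnDeriv_withDensity νd hFprodmeas
    rw [lintegral_congr_ae ((h1.mono fun x hx => by dsimp only; rw [hx]) :
      (fun x => ((Measure.pi fun j =>
        ENNReal.ofReal γ • (Measure.pi fun t => gaussianReal (g j * m t) v)
          + ENNReal.ofReal (1 - γ) • νT).rnDeriv νd x) ^ (α:ℝ))
        =ᵐ[νd] (fun x => Fprod x ^ (α:ℝ)))]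
    calc ∫⁻ x, Fprod x ^ (α:ℝ) ∂νd
        = ∫⁻ x, ∏ j, (F (g j) (x j)) ^ α ∂νd := by
          apply lintegral_congr
          intro x
          rw [ENNReal.rpow_natCast, hFprod, Finset.prod_pow]
      _ = ∏ j, ∫⁻ y, (F (g j) y) ^ α ∂νT :=
          lintegral_pi_prod _ (fun j => fun y => (F (g j) y) ^ α)
            (fun j => (hFmeas (g j)).pow_const α)
      _ = ∏ j, ENNReal.ofReal (Bfun γ σ α (M * g j ^ 2)) := by
          refine Finset.prod_congr rfl fun j _ => ?_
          have hc := col_lintegral γ hγ0 hγ1 α (g j) hv T m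
          rw [hνT, hν₀]
          rw [show (fun y => (F (g j) y) ^ α) = fun x : Fin T → ℝ => (ENNReal.ofReal γ *
              ENNReal.ofReal (Real.exp (∑ t, (g j * m t * x t / v - (g j * m t) ^ 2 / (2 * v))))
              + ENNReal.ofReal (1 - γ)) ^ α from rfl]
          rw [hc]
          congr 1
          rw [Bfun]
          refine Finset.sum_congr rfl fun ℓ _ => ?_
          congr 2
          rw [hvr]
          ring
      _ = ENNReal.ofReal (∏ j, Bfun γ σ α (M * g j ^ 2)) :=
          (ENNReal.ofReal_prod_of_nonneg fun j _ => (hBpos j).le).symm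
  rw [hint, ENNReal.log_ofReal_of_pos (Finset.prod_pos fun j _ => hBpos j),
    ← EReal.coe_mul]
  rw [EReal.coe_le_coe_iff]
  -- now a real inequality
  have hα1 : (0:ℝ) < (α:ℝ) - 1 := by
    have : (2:ℝ) ≤ (α:ℝ) := by exact_mod_cast hα
    linarith
  set s₀ : ℝ := ξ ^ 2 * Δinf ^ 2 with hs₀def
  have hs₀pos : 0 < s₀ := by positivity
  have htgt : (∑ ℓ ∈ Finset.range (α + 1),
      (α.choose ℓ : ℝ) * (1 - γ) ^ (α - ℓ) * γ ^ ℓ *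
        Real.exp ((ℓ : ℝ) * ((ℓ : ℝ) - 1) * ξ ^ 2 * Δinf ^ 2 / (2 * σ ^ 2)))
      = Bfun γ σ α s₀ := by
    rw [Bfun]
    refine Finset.sum_congr rfl fun ℓ _ => ?_
    congr 2
    rw [hs₀def]
    ring
  rw [htgt]
  have hlogB0 : 0 ≤ Real.log (Bfun γ σ α s₀) :=
    Real.log_nonneg (Bfun_ge_one γ σ α hγ0 hγ1 hσ hs₀pos.le)
  have hlogs : Real.log (∏ j, Bfun γ σ α (M * g j ^ 2))
      = ∑ j, Real.log (Bfun γ σ α (M * g j ^ 2)) :=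
    Real.log_prod fun j _ => (hBpos j).ne'
  have hsum : ∑ j, Real.log (Bfun γ σ α (M * g j ^ 2))
      ≤ (Δ₂ ^ 2 / Δinf ^ 2) * Real.log (Bfun γ σ α s₀) := by
    calc ∑ j, Real.log (Bfun γ σ α (M * g j ^ 2))
        ≤ ∑ j, (M * g j ^ 2 / s₀) * Real.log (Bfun γ σ α s₀) := by
          refine Finset.sum_le_sum fun j _ => ?_
          exact log_Bfun_le γ σ α hγ0 hγ1 hσ (mul_nonneg hM0 (sq_nonneg _))
            (mul_le_mul hMξ (hgsq j) (sq_nonneg _) (by positivity)) hs₀pos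
      _ = (M * (∑ j, g j ^ 2) / s₀) * Real.log (Bfun γ σ α s₀) := by
          rw [← Finset.sum_mul, ← Finset.sum_div, ← Finset.mul_sum]
      _ ≤ (Δ₂ ^ 2 / Δinf ^ 2) * Real.log (Bfun γ σ α s₀) := by
          refine mul_le_mul_of_nonneg_right ?_ hlogB0
          have h1 : M * (∑ j, g j ^ 2) ≤ ξ ^ 2 * Δ₂ ^ 2 :=
            mul_le_mul hMξ hG2 hsg0 (by positivity)
          calc M * (∑ j, g j ^ 2) / s₀ ≤ (ξ ^ 2 * Δ₂ ^ 2) / s₀ :=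
                (div_le_div_iff_of_pos_right hs₀pos).mpr h1
            _ = Δ₂ ^ 2 / Δinf ^ 2 := by
                rw [hs₀def, mul_div_mul_left _ _ (by positivity : (ξ:ℝ) ^ 2 ≠ 0)]
  calc ((α:ℝ) - 1)⁻¹ * Real.log (∏ j, Bfun γ σ α (M * g j ^ 2))
      = ((α:ℝ) - 1)⁻¹ * ∑ j, Real.log (Bfun γ σ α (M * g j ^ 2)) := by rw [hlogs]
    _ ≤ ((α:ℝ) - 1)⁻¹ * ((Δ₂ ^ 2 / Δinf ^ 2) * Real.log (Bfun γ σ α s₀)) :=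
        mul_le_mul_of_nonneg_left hsum (inv_nonneg.mpr hα1.le)
    _ = Δ₂ ^ 2 / Δinf ^ 2 / ((α:ℝ) - 1) * Real.log (Bfun γ σ α s₀) := by ring
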